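/- Fix an even integer n ≥ 2, set N = 2n + 3, and let V, F, the Verlinde product, and the structure constants N_{ab}^c be as defined. Then N_{nn}^1 = −1; that is, the coefficient of e₁ in e_n · e_n equals −1. -/

import Mathlib

open BigOperators

/-- The folding map `F : ℕ → V` for type `A₂⁽²⁾` at level `2n`, where
`V = Fin (n+1) → ℤ` is the free ℤ-module with basis `e₀, …, e_n` and
`N = 2n + 3`:  `F m = e_{m'}` if `m ≡ m' (mod N)` with `0 ≤ m' ≤ n`;
`F m = 0` if `m ≡ N - 1 (mod N)`; `F m = -e_{m'}` if `m + m' + 2 ≡ 0 (mod N)`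
with `0 ≤ m' ≤ n`. -/
def foldA2 (n m : ℕ) : Fin (n + 1) → ℤ :=
  if h : m % (2 * n + 3) ≤ n then
    Pi.single (⟨m % (2 * n + 3), by omega⟩ : Fin (n + 1)) 1
  else if h2 : m % (2 * n + 3) = 2 * n + 2 then 0
  else - Pi.single (⟨2 * n + 1 - m % (2 * n + 3), by omega⟩ : Fin (n + 1)) 1

/-- The basis vector `e_m` of `V = Fin (n+1) → ℤ` (zero if `m > n`). -/
def eN (n m : ℕ) : Fin (n + 1) → ℤ :=
  if h : m ≤ n then Pi.single (⟨m, by omega⟩ : Fin (n + 1)) 1 else 0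

/-- The Verlinde product on `V = Fin (n+1) → ℤ`: the ℤ-bilinear product with
`e_a · e_b = ∑_{i=0}^{min a b} F (a + b - 2 i)`. -/
def vmul (n : ℕ) (x y : Fin (n + 1) → ℤ) : Fin (n + 1) → ℤ :=
  fun c => ∑ a : Fin (n + 1), ∑ b : Fin (n + 1),
    x a * y b * (∑ i ∈ Finset.range (min a.1 b.1 + 1), foldA2 n (a.1 + b.1 - 2 * i)) c

/-- The structure constants `N_{ab}^c` of the Verlinde product, defined by
`e_a · e_b = ∑_c N_{ab}^c e_c`. -/
def Nconst (n a b c : ℕ) : ℤ :=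
  if h : c ≤ n then vmul n (eN n a) (eN n b) ⟨c, by omega⟩ else 0

/-- For even `n ≥ 2`, the coefficient of `e₁` in `e_n · e_n` equals `-1`:
`N_{nn}^1 = -1` in the Verlinde algebra of type `A₂⁽²⁾` at level `2n`. -/

lemma fold_aux (n : ℕ) (hn : 2 ≤ n) (hev : Even n) (i : ℕ) (hi : i ≤ n) :
    foldA2 n (n + n - 2 * i) ⟨1, by omega⟩ = if i = 0 then -1 else 0 := by
  obtain ⟨k, hk⟩ := hev
  have hm : (n + n - 2 * i) % (2 * n + 3) = n + n - 2 * i :=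
    Nat.mod_eq_of_lt (by omega)
  unfold foldA2
  simp only [hm]
  by_cases h : n + n - 2 * i ≤ n
  · rw [dif_pos h, if_neg (by omega : ¬ i = 0), Pi.single_apply, if_neg]
    intro hcontra
    have : (1 : ℕ) = n + n - 2 * i := congrArg Fin.val hcontra
    omega
  · rw [dif_neg h, dif_neg (by omega)]
    simp only [Pi.neg_apply, Pi.single_apply]
    by_cases hi0 : i = 0
    · have hfin : (⟨1, by omega⟩ : Fin (n + 1)) = ⟨2 * n + 1 - (n + n - 2 * i), by omega⟩ :=
        Fin.ext (show (1 : ℕ) = 2 * n + 1 - (n + n - 2 * i) by omega)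
      rw [if_pos hi0, if_pos hfin]
    · rw [if_neg hi0, if_neg, neg_zero]
      intro hcontra
      have : (1 : ℕ) = 2 * n + 1 - (n + n - 2 * i) := congrArg Fin.val hcontra
      omega

theorem Nconst_n_n_one (n : ℕ) (hn : 2 ≤ n) (hev : Even n) :
    Nconst n n n 1 = -1 := by
  have h1 : (1 : ℕ) ≤ n := by omega
  unfold Nconst
  rw [dif_pos h1]
  unfold vmul
  have hen : eN n n = Pi.single (⟨n, by omega⟩ : Fin (n + 1)) 1 := by
    unfold eN; rw [dif_pos le_rfl]
  rw [hen]
  rw [Fintype.sum_eq_single (⟨n, by omega⟩ : Fin (n + 1))]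
  · rw [Fintype.sum_eq_single (⟨n, by omega⟩ : Fin (n + 1))]
    · simp only [Pi.single_eq_same, one_mul, min_self]
      rw [Finset.sum_apply]
      rw [Finset.sum_congr rfl (fun i hi => fold_aux n hn hev i
        (by simpa [Nat.lt_succ_iff] using Finset.mem_range.mp hi))]
      simp
    · intro b hb
      rw [Pi.single_eq_of_ne hb]
      ring
  · intro a ha
    rw [Pi.single_eq_of_ne ha]
    simp
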